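/- arXiv:1411.4412 — 4 statements merged into one kernel-verified Lean document; each statement's English description precedes it below -/
import Mathlib

section
/- Let Ã > 0, let (φ̄, θ̄) ∈ ℝ², set B₀ := φ̄² + (√2+1)² θ̄² + 1/(4Ã²) and (x, y, z) := (1/(2ÃB₀), (√2+1)θ̄/B₀, φ̄/B₀) (the image of (−1/(2Ã), (√2+1)θ̄, φ̄) under the unit-sphere inversion followed by reflection of the first coordinate). Then (x − Ã)² + y² + z² = Ã², and ψ₀(φ̄, θ̄) := −(φ̄² + (√2+1)θ̄² − √2/(8Ã²))/B₀ satisfies ψ₀ = −(1/(2Ãx))(z² + y² − (2−√2)y²) + (√2/(4Ã))x. Moreover, writing x = Ã(1 + cos θ), y = Ã sin θ cos φ, z = Ã sin θ sin φ with (θ, φ) ∈ (0, π) × [0, 2π], one has ψ₀ = (√2/2) cos θ + ((2−√2)/4)(1 − cos θ) cos 2φ. -/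
theorem statement10 (Atil φb θb B0 x y z ψ0 : ℝ) (hA : 0 < Atil)
    (hB0 : B0 = φb ^ 2 + (Real.sqrt 2 + 1) ^ 2 * θb ^ 2 + 1 / (4 * Atil ^ 2))
    (hx : x = 1 / (2 * Atil * B0))
    (hy : y = (Real.sqrt 2 + 1) * θb / B0)
    (hz : z = φb / B0)
    (hψ : ψ0 = -((φb ^ 2 + (Real.sqrt 2 + 1) * θb ^ 2 -
        Real.sqrt 2 / (8 * Atil ^ 2)) / B0)) :
    ((x - Atil) ^ 2 + y ^ 2 + z ^ 2 = Atil ^ 2) ∧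
      (ψ0 = -(1 / (2 * Atil * x)) * (z ^ 2 + y ^ 2 - (2 - Real.sqrt 2) * y ^ 2) +
        Real.sqrt 2 / (4 * Atil) * x) ∧
      (∀ θ φ : ℝ, θ ∈ Set.Ioo 0 Real.pi → φ ∈ Set.Icc 0 (2 * Real.pi) →
        x = Atil * (1 + Real.cos θ) →
        y = Atil * Real.sin θ * Real.cos φ →
        z = Atil * Real.sin θ * Real.sin φ →
        ψ0 = Real.sqrt 2 / 2 * Real.cos θ +
          (2 - Real.sqrt 2) / 4 * (1 - Real.cos θ) * Real.cos (2 * φ)) := by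
  have hs : Real.sqrt 2 ^ 2 = 2 := Real.sq_sqrt (by norm_num)
  have hBpos : 0 < B0 := by rw [hB0]; positivity
  have hBne : B0 ≠ 0 := hBpos.ne'
  have hxpos : 0 < x := by rw [hx]; positivity
  have hAne : Atil ≠ 0 := hA.ne'
  have hB0' : 4 * Atil ^ 2 * B0 =
      4 * Atil ^ 2 * (φb ^ 2 + (Real.sqrt 2 + 1) ^ 2 * θb ^ 2) + 1 := by
    rw [hB0]; field_simp
  have key : ψ0 = -(1 / (2 * Atil * x)) * (z ^ 2 + y ^ 2 - (2 - Real.sqrt 2) * y ^ 2) +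
      Real.sqrt 2 / (4 * Atil) * x := by
    rw [hψ, hx, hy, hz]
    field_simp
    ring_nf
    linear_combination (64 * θb ^ 2 * Atil ^ 2 * (1 + Real.sqrt 2)) * hs
  refine ⟨?_, key, ?_⟩
  · rw [hx, hy, hz]
    field_simp
    ring_nf
    linear_combination (-1) * hB0'
  · intro θ φ hθ hφ hx' hy' hz'
    have hc : 0 < 1 + Real.cos θ := by nlinarith [hxpos, hx']
    have hsin : Real.sin θ ^ 2 = 1 - Real.cos θ ^ 2 := Real.sin_sq θ
    have hsf : Real.sin φ ^ 2 = 1 - Real.cos φ ^ 2 := Real.sin_sq φ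
    rw [key, hx', hy', hz', Real.cos_two_mul]
    have h1 : Atil * (1 + Real.cos θ) ≠ 0 := by positivity
    field_simp
    ring_nf
    linear_combination ((-4 * Real.sqrt 2 + 4) * Real.cos φ ^ 2 -
        4 * Real.sin φ ^ 2) * hsin +
      (-4 * (1 - Real.cos θ ^ 2)) * hsf
end

section
/- Let α₁, α₂, α₃ be pairwise distinct real numbers. Then (x₁, …, x₆, λ, μ, ν) ∈ ℝ⁹ satisfies the system { 2(α_i − λ)x_i − ν x_{i+3} = 0 for i = 1,2,3; ν x_i + 2(μ + α_i)x_{i+3} = 0 for i = 1,2,3; x₁² + x₂² + x₃² = 1; x₄² + x₅² + x₆² = 1; x₁x₄ + x₂x₅ + x₃x₆ = 0 } if and only if there exist indices i, j ∈ {1,2,3} with i ≠ j and signs s, t ∈ {1, −1} such that x_i = s, x_{j+3} = t, all other coordinates x_k (k ∈ {1,…,6} ∖ {i, j+3}) vanish, λ = α_i, μ = −α_j, and ν = 0. In particular the system has exactly 24 solutions in (x₁, …, x₆). -/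
theorem statement12 (α : Fin 3 → ℝ) (hdist : ∀ i j : Fin 3, i ≠ j → α i ≠ α j)
    (x y : Fin 3 → ℝ) (l m v : ℝ) :
    ((∀ i : Fin 3, 2 * (α i - l) * x i - v * y i = 0) ∧
      (∀ i : Fin 3, v * x i + 2 * (m + α i) * y i = 0) ∧
      (∑ i, x i ^ 2 = 1) ∧ (∑ i, y i ^ 2 = 1) ∧ (∑ i, x i * y i = 0)) ↔
    (∃ i j : Fin 3, i ≠ j ∧ ∃ s t : ℝ, (s = 1 ∨ s = -1) ∧ (t = 1 ∨ t = -1) ∧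
      x i = s ∧ y j = t ∧ (∀ k : Fin 3, k ≠ i → x k = 0) ∧
      (∀ k : Fin 3, k ≠ j → y k = 0) ∧ l = α i ∧ m = -α j ∧ v = 0) := by
  constructor
  · rintro ⟨h1, h2, hx, hy, hxy⟩
    have hx3 : x 0 ^ 2 + x 1 ^ 2 + x 2 ^ 2 = 1 := by simpa [Fin.sum_univ_three] using hx
    have hy3 : y 0 ^ 2 + y 1 ^ 2 + y 2 ^ 2 = 1 := by simpa [Fin.sum_univ_three] using hy
    have hxy3 : x 0 * y 0 + x 1 * y 1 + x 2 * y 2 = 0 := by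
      simpa [Fin.sum_univ_three] using hxy
    have hv : v = 0 := by
      linear_combination (-(v/2))*hx3 + (-(v/2))*hy3
        + (1/2)*(x 0 * h2 0 + x 1 * h2 1 + x 2 * h2 2)
        - (1/2)*(y 0 * h1 0 + y 1 * h1 1 + y 2 * h1 2)
        - (m+l)*hxy3
    obtain ⟨i, -, hi⟩ := Finset.exists_ne_zero_of_sum_ne_zero
      (by rw [hx]; exact one_ne_zero)
    obtain ⟨j, -, hj⟩ := Finset.exists_ne_zero_of_sum_ne_zero
      (by rw [hy]; exact one_ne_zero)
    have hxi : x i ≠ 0 := fun h => hi (by rw [h]; ring)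
    have hyj : y j ≠ 0 := fun h => hj (by rw [h]; ring)
    have hl : l = α i := by
      have h' : 2 * (α i - l) * x i = 0 := by linear_combination h1 i + y i * hv
      rcases mul_eq_zero.1 h' with h'' | h''
      · linarith
      · exact absurd h'' hxi
    have hm : m = -α j := by
      have h' : 2 * (m + α j) * y j = 0 := by linear_combination h2 j - x j * hv
      rcases mul_eq_zero.1 h' with h'' | h''
      · linarith
      · exact absurd h'' hyj
    have hxk : ∀ k, k ≠ i → x k = 0 := by
      intro k hk
      have h' : 2 * (α k - α i) * x k = 0 := by
        linear_combination h1 k + y k * hv + 2 * x k * hl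
      rcases mul_eq_zero.1 h' with h'' | h''
      · exact absurd (by linarith : α k = α i) (hdist k i hk)
      · exact h''
    have hyk : ∀ k, k ≠ j → y k = 0 := by
      intro k hk
      have h' : 2 * (α k - α j) * y k = 0 := by
        linear_combination h2 k - x k * hv - 2 * y k * hm
      rcases mul_eq_zero.1 h' with h'' | h''
      · exact absurd (by linarith : α k = α j) (hdist k j hk)
      · exact h''
    have hij : i ≠ j := by
      intro h
      subst h
      have hsum : ∑ k, x k * y k = x i * y i :=
        Finset.sum_eq_single_of_mem i (Finset.mem_univ i)
          (fun k _ hk => by rw [hxk k hk]; ring)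
      rw [hxy] at hsum
      rcases mul_eq_zero.1 hsum.symm with h | h
      · exact hxi h
      · exact hyj h
    have hxi2 : x i ^ 2 = 1 := by
      have hsum : ∑ k, x k ^ 2 = x i ^ 2 :=
        Finset.sum_eq_single_of_mem i (Finset.mem_univ i)
          (fun k _ hk => by rw [hxk k hk]; ring)
      rw [← hx, hsum]
    have hyj2 : y j ^ 2 = 1 := by
      have hsum : ∑ k, y k ^ 2 = y j ^ 2 :=
        Finset.sum_eq_single_of_mem j (Finset.mem_univ j)
          (fun k _ hk => by rw [hyk k hk]; ring)
      rw [← hy, hsum]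
    refine ⟨i, j, hij, x i, y j, ?_, ?_, rfl, rfl, hxk, hyk, hl, hm, hv⟩
    · rcases mul_eq_zero.1 (show (x i - 1) * (x i + 1) = 0 by nlinarith) with h | h
      · left; linarith
      · right; linarith
    · rcases mul_eq_zero.1 (show (y j - 1) * (y j + 1) = 0 by nlinarith) with h | h
      · left; linarith
      · right; linarith
  · rintro ⟨i, j, hij, s, t, hs, ht, hxi, hyj, hxk, hyk, hl, hm, hv⟩
    subst hv
    have hyi : y i = 0 := hyk i hij
    refine ⟨?_, ?_, ?_, ?_, ?_⟩
    · intro k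
      by_cases hk : k = i
      · subst hk; rw [hl]; ring
      · rw [hxk k hk]; ring
    · intro k
      by_cases hk : k = j
      · subst hk; rw [hm]; ring
      · rw [hyk k hk]; ring
    · have hsum : ∑ k, x k ^ 2 = x i ^ 2 :=
        Finset.sum_eq_single_of_mem i (Finset.mem_univ i)
          (fun k _ hk => by rw [hxk k hk]; ring)
      rw [hsum, hxi]
      rcases hs with h | h <;> rw [h] <;> norm_num
    · have hsum : ∑ k, y k ^ 2 = y j ^ 2 :=
        Finset.sum_eq_single_of_mem j (Finset.mem_univ j)
          (fun k _ hk => by rw [hyk k hk]; ring)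
      rw [hsum, hyj]
      rcases ht with h | h <;> rw [h] <;> norm_num
    · apply Finset.sum_eq_zero
      intro k _
      by_cases hk : k = i
      · subst hk; rw [hyi]; ring
      · rw [hxk k hk]; ring
end

section
/- Let à := (2π²)^{1/4}, let S = (R_{ij}) be a symmetric real 3×3 matrix, and set ψ₀(θ, φ) := (√2/2) cos θ + ((2−√2)/4)(1 − cos θ) cos 2φ and n₀(θ, φ) := (cos θ, sin θ cos φ, sin θ sin φ). Then ∫₀^π ∫₀^{2π} (2/Ã) ⟨S n₀(θ,φ), n₀(θ,φ)⟩ ψ₀(θ, φ) Ã² sin θ dφ dθ = (4/3) π à ((2−√2)/4) (R₂₂ − R₃₃). -/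
noncomputable section
open Matrix

/-- `Ã = (2π²)^{1/4}`. -/
def Atil : ℝ := (2 * Real.pi ^ 2) ^ ((1 : ℝ) / 4)

/-- The outward unit normal of the sphere `S²_Ã` in spherical coordinates. -/
def n0v (θ φ : ℝ) : Fin 3 → ℝ :=
  ![Real.cos θ, Real.sin θ * Real.cos φ, Real.sin θ * Real.sin φ]

/-- The limit normal variation field `ψ₀`. -/
def psi0s (θ φ : ℝ) : ℝ :=
  Real.sqrt 2 / 2 * Real.cos θ +
    (2 - Real.sqrt 2) / 4 * (1 - Real.cos θ) * Real.cos (2 * φ)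

private lemma ii {f : ℝ → ℝ} (hf : Continuous f) (a b : ℝ) :
    IntervalIntegrable f MeasureTheory.volume a b := hf.intervalIntegrable a b

private lemma cos4 : ∫ φ in (0:ℝ)..(2*Real.pi), Real.cos φ ^ 4 = 3 * Real.pi / 4 := by
  have h := @integral_cos_pow 0 (2*Real.pi) 2
  norm_num [Real.cos_two_pi, Real.sin_two_pi] at h
  linarith

private lemma sincos3 : ∫ φ in (0:ℝ)..(2*Real.pi), Real.sin φ * Real.cos φ ^ 3 = 0 := by
  have h := @integral_sin_pow_mul_cos_pow_odd 0 (2*Real.pi) 1 1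
  norm_num [Real.sin_two_pi] at h
  exact h

private lemma sin2cos2 : ∫ φ in (0:ℝ)..(2*Real.pi),
    Real.sin φ ^ 2 * Real.cos φ ^ 2 = Real.pi / 4 := by
  have h8 : Real.sin (4 * (2 * Real.pi)) = 0 := by
    rw [show (4:ℝ) * (2*Real.pi) = (8:ℤ) * Real.pi by push_cast; ring, Real.sin_int_mul_pi]
  rw [integral_sin_sq_mul_cos_sq]
  norm_num [h8]
  ring

private lemma phi_split (k0 k1 k2 k3 k4 k5 k6 k7 k8 k9 k10 : ℝ) :
    (∫ φ in (0:ℝ)..(2*Real.pi), (k0 + k1 * Real.cos φ + k2 * Real.sin φ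
      + k3 * Real.cos φ ^ 2 + k4 * (Real.sin φ * Real.cos φ) + k5 * Real.sin φ ^ 2
      + k6 * Real.cos φ ^ 3 + k7 * (Real.sin φ * Real.cos φ ^ 2) + k8 * Real.cos φ ^ 4
      + k9 * (Real.sin φ * Real.cos φ ^ 3) + k10 * (Real.sin φ ^ 2 * Real.cos φ ^ 2)))
    = k0 * (2 * Real.pi) + k3 * Real.pi + k5 * Real.pi
      + k8 * (3 * Real.pi / 4) + k10 * (Real.pi / 4) := by
  repeat rw [intervalIntegral.integral_add (ii (by fun_prop) _ _) (ii (by fun_prop) _ _)]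
  simp only [intervalIntegral.integral_const_mul, cos4, sincos3, sin2cos2,
    integral_cos, integral_sin, integral_cos_sq, integral_sin_sq, integral_sin_mul_cos₁,
    integral_cos_pow_three, integral_sin_mul_cos_sq, intervalIntegral.integral_const,
    smul_eq_mul, Real.sin_two_pi, Real.cos_two_pi, Real.sin_zero, Real.cos_zero]
  ring

private lemma inner_eval (K P B A0 A1 A2 A3 A4 A5 : ℝ) :
    (∫ φ in (0:ℝ)..(2*Real.pi), K * ((A0 + A1 * Real.cos φ ^ 2 + A2 * Real.sin φ ^ 2
        + A3 * Real.cos φ + A4 * Real.sin φ + A5 * (Real.sin φ * Real.cos φ))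
      * (P + B * (2 * Real.cos φ ^ 2 - 1))))
    = K * Real.pi * (P * (2*A0 + A1 + A2) + B * (A1 - A2) / 2) := by
  have hfe : (fun φ => K * ((A0 + A1 * Real.cos φ ^ 2 + A2 * Real.sin φ ^ 2
        + A3 * Real.cos φ + A4 * Real.sin φ + A5 * (Real.sin φ * Real.cos φ))
      * (P + B * (2 * Real.cos φ ^ 2 - 1))))
      = fun φ => (K*((P-B)*A0) + (K*((P-B)*A3)) * Real.cos φ + (K*((P-B)*A4)) * Real.sin φ
        + (K*(2*B*A0 + (P-B)*A1)) * Real.cos φ ^ 2 + (K*((P-B)*A5)) * (Real.sin φ * Real.cos φ)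
        + (K*((P-B)*A2)) * Real.sin φ ^ 2 + (K*(2*B*A3)) * Real.cos φ ^ 3
        + (K*(2*B*A4)) * (Real.sin φ * Real.cos φ ^ 2) + (K*(2*B*A1)) * Real.cos φ ^ 4
        + (K*(2*B*A5)) * (Real.sin φ * Real.cos φ ^ 3)
        + (K*(2*B*A2)) * (Real.sin φ ^ 2 * Real.cos φ ^ 2)) := by
    funext φ; ring
  rw [hfe, phi_split]
  ring

private lemma sincos3' : ∫ θ in (0:ℝ)..Real.pi, Real.sin θ * Real.cos θ ^ 3 = 0 := by
  have h := @integral_sin_pow_mul_cos_pow_odd 0 Real.pi 1 1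
  norm_num [Real.sin_pi] at h
  exact h

private lemma sin3cos : ∫ θ in (0:ℝ)..Real.pi, Real.sin θ ^ 3 * Real.cos θ = 0 := by
  have h := @integral_sin_pow_mul_cos_pow_odd 0 Real.pi 3 0
  norm_num [Real.sin_pi] at h
  exact h

private lemma theta_split (e1 e2 e3 : ℝ) :
    (∫ θ in (0:ℝ)..Real.pi, (e1 * (Real.sin θ * Real.cos θ ^ 3)
      + e2 * (Real.sin θ ^ 3 * Real.cos θ) + e3 * Real.sin θ ^ 3))
    = e3 * (4/3) := by
  repeat rw [intervalIntegral.integral_add (ii (by fun_prop) _ _) (ii (by fun_prop) _ _)]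
  simp only [intervalIntegral.integral_const_mul, sincos3', sin3cos, integral_sin_pow_three,
    Real.cos_pi, Real.cos_zero]
  ring

theorem statement15 (S : Matrix (Fin 3) (Fin 3) ℝ) (hS : S.IsSymm) :
    (∫ θ in (0 : ℝ)..Real.pi, ∫ φ in (0 : ℝ)..(2 * Real.pi),
        (2 / Atil) * (S.mulVec (n0v θ φ) ⬝ᵥ n0v θ φ) * psi0s θ φ *
          (Atil ^ 2 * Real.sin θ)) =
      4 / 3 * Real.pi * Atil * ((2 - Real.sqrt 2) / 4) * (S 1 1 - S 2 2) := by
  have hA : Atil ≠ 0 := by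
    have : (0:ℝ) < Atil := Real.rpow_pos_of_pos (by positivity) _
    linarith
  have h1 : ∀ θ : ℝ, (∫ φ in (0 : ℝ)..(2 * Real.pi),
        (2 / Atil) * (S.mulVec (n0v θ φ) ⬝ᵥ n0v θ φ) * psi0s θ φ *
          (Atil ^ 2 * Real.sin θ))
      = (2 / Atil * Atil ^ 2 * Real.pi * (Real.sqrt 2 * S 0 0)) * (Real.sin θ * Real.cos θ ^ 3)
        + (2 / Atil * Atil ^ 2 * Real.pi * (Real.sqrt 2 / 2 * (S 1 1 + S 2 2)
            - (2 - Real.sqrt 2) / 8 * (S 1 1 - S 2 2))) * (Real.sin θ ^ 3 * Real.cos θ)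
        + (2 / Atil * Atil ^ 2 * Real.pi * ((2 - Real.sqrt 2) / 8 * (S 1 1 - S 2 2)))
            * Real.sin θ ^ 3 := by
    intro θ
    have hfe : (fun φ => (2 / Atil) * (S.mulVec (n0v θ φ) ⬝ᵥ n0v θ φ) * psi0s θ φ *
          (Atil ^ 2 * Real.sin θ))
        = fun φ => (2 / Atil * Atil ^ 2 * Real.sin θ)
          * ((S 0 0 * Real.cos θ ^ 2 + (S 1 1 * Real.sin θ ^ 2) * Real.cos φ ^ 2
              + (S 2 2 * Real.sin θ ^ 2) * Real.sin φ ^ 2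
              + ((S 0 1 + S 1 0) * (Real.cos θ * Real.sin θ)) * Real.cos φ
              + ((S 0 2 + S 2 0) * (Real.cos θ * Real.sin θ)) * Real.sin φ
              + ((S 1 2 + S 2 1) * Real.sin θ ^ 2) * (Real.sin φ * Real.cos φ))
            * (Real.sqrt 2 / 2 * Real.cos θ
              + ((2 - Real.sqrt 2) / 4 * (1 - Real.cos θ)) * (2 * Real.cos φ ^ 2 - 1))) := by
      funext φ
      simp only [n0v, psi0s, Matrix.mulVec, dotProduct, Fin.sum_univ_three,
        Matrix.cons_val_zero, Matrix.cons_val_one, Matrix.head_cons, Matrix.cons_val_two,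
        Matrix.tail_cons, Real.cos_two_mul]
      ring
    rw [hfe, inner_eval]
    ring
  simp only [h1]
  rw [theta_split]
  field_simp
  ring
end
end

section
/- Let S = (R_{ij}) be a symmetric real 3×3 matrix with Sc := tr S, and define h : ℝ³ → (symmetric 3×3 matrices) by h_{αβ}(x) := (Sc/6)(|x|² δ_{αβ} − x_α x_β) − (1/3) δ_{αβ} ⟨Sx, x⟩ − (1/3)|x|² R_{αβ} + (1/3)(x_α (Sx)_β + x_β (Sx)_α). Let à > 0, let n₀ be a unit vector in ℝ³, set x := Ã(n₀ + e_x) with e_x = (1,0,0), and let e₁, e₂ be unit vectors such that (e₁, e₂, n₀) is an orthonormal basis of ℝ³. Denote by ∂_{n₀}h(x) the matrix whose (α,β) entry is ⟨∇h_{αβ}(x), n₀⟩. Then ∂_{n₀}h(x)(e₁, e₁) + ∂_{n₀}h(x)(e₂, e₂) = −(2Ã/3) ⟨S(n₀ + e_x), n₀⟩. -/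
noncomputable section

open Matrix

/-- The first standard basis vector `eₓ`. -/
def exv : Fin 3 → ℝ := ![1, 0, 0]

/-- The second-order term of the metric in geodesic normal coordinates, expressed through
the Ricci tensor `S` and the scalar curvature `Sc = tr S`:
`h_{αβ}(x) = (Sc/6)(|x|²δ_{αβ} - x_α x_β) - (1/3)δ_{αβ}⟨Sx,x⟩ - (1/3)|x|² S_{αβ}
  + (1/3)(x_α (Sx)_β + x_β (Sx)_α)`. -/
def hEntry (S : Matrix (Fin 3) (Fin 3) ℝ) (x : Fin 3 → ℝ) (α β : Fin 3) : ℝ :=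
  Matrix.trace S / 6 *
      ((∑ i, x i ^ 2) * (if α = β then (1 : ℝ) else 0) - x α * x β) -
    (1 / 3) * (if α = β then (1 : ℝ) else 0) * (∑ i, (∑ j, S i j * x j) * x i) -
    (1 / 3) * (∑ i, x i ^ 2) * S α β +
    (1 / 3) * (x α * (∑ j, S β j * x j) + x β * (∑ j, S α j * x j))

/-- The entry `(∂_{n₀} h(x))_{αβ} = ⟨∇h_{αβ}(x), n₀⟩` of the normal derivative of `h`. -/
def dnhEntry (S : Matrix (Fin 3) (Fin 3) ℝ) (x n₀ : Fin 3 → ℝ) (α β : Fin 3) : ℝ :=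
  fderiv ℝ (fun y => hEntry S y α β) x n₀

set_option maxHeartbeats 1000000 in
lemma dnh (S : Matrix (Fin 3) (Fin 3) ℝ) (x n : Fin 3 → ℝ) (α β : Fin 3) :
    dnhEntry S x n α β =
      Matrix.trace S / 6 *
          ((2 * ∑ i, x i * n i) * (if α = β then (1 : ℝ) else 0) - (n α * x β + x α * n β)) -
        1 / 3 * (if α = β then (1 : ℝ) else 0) *
          (∑ i, ((∑ j, S i j * n j) * x i + (∑ j, S i j * x j) * n i)) -
        1 / 3 * (2 * ∑ i, x i * n i) * S α β +
        1 / 3 * (n α * (∑ j, S β j * x j) + x α * (∑ j, S β j * n j) +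
          (n β * (∑ j, S α j * x j) + x β * (∑ j, S α j * n j))) := by
  have h1 : ∀ i : Fin 3, HasFDerivAt (fun y : Fin 3 → ℝ => y i)
      (ContinuousLinearMap.proj (R := ℝ) i) x := fun i => hasFDerivAt_apply i x
  have hQ := HasFDerivAt.fun_sum (fun i (_ : i ∈ Finset.univ) => (h1 i).fun_mul (h1 i))
  have hSrow : ∀ γ : Fin 3, HasFDerivAt (fun y : Fin 3 → ℝ => ∑ j, S γ j * y j)
      (∑ j, S γ j • ContinuousLinearMap.proj (R := ℝ) j) x := fun γ =>
    HasFDerivAt.fun_sum (fun j (_ : j ∈ Finset.univ) => (h1 j).const_mul (S γ j))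
  have hB := HasFDerivAt.fun_sum (fun i (_ : i ∈ Finset.univ) => (hSrow i).fun_mul (h1 i))
  have hf1 := ((hQ.mul_const (if α = β then (1 : ℝ) else 0)).fun_sub
    ((h1 α).fun_mul (h1 β))).const_mul (Matrix.trace S / 6)
  have hf2 := hB.const_mul (1 / 3 * (if α = β then (1 : ℝ) else 0))
  have hf3 := (hQ.const_mul (1 / 3 : ℝ)).mul_const (S α β)
  have hf4 := (((h1 α).fun_mul (hSrow β)).fun_add ((h1 β).fun_mul (hSrow α))).const_mul (1 / 3 : ℝ)
  have H := ((hf1.fun_sub hf2).fun_sub hf3).fun_add hf4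
  rw [dnhEntry]
  simp only [hEntry, pow_two]
  rw [H.fderiv]
  by_cases hab : α = β <;>
    simp [hab, Fin.sum_univ_three, Finset.sum_apply] <;> ring

lemma completeness (e₁ e₂ n₀ : Fin 3 → ℝ)
    (he₁ : ∑ i, e₁ i ^ 2 = 1) (he₂ : ∑ i, e₂ i ^ 2 = 1) (hn : ∑ i, n₀ i ^ 2 = 1)
    (h12 : ∑ i, e₁ i * e₂ i = 0) (h1n : ∑ i, e₁ i * n₀ i = 0)
    (h2n : ∑ i, e₂ i * n₀ i = 0) (i j : Fin 3) :
    e₁ i * e₁ j + e₂ i * e₂ j + n₀ i * n₀ j = if i = j then 1 else 0 := by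
  simp only [Fin.sum_univ_three] at he₁ he₂ hn h12 h1n h2n
  set M : Matrix (Fin 3) (Fin 3) ℝ := Matrix.of ![e₁, e₂, n₀] with hM
  have hMMT : M * Mᵀ = 1 := by
    ext a b
    fin_cases a <;> fin_cases b <;>
      simp [hM, Matrix.mul_apply, Matrix.transpose_apply, Matrix.transpose, Matrix.vecHead, Matrix.vecTail, Fin.sum_univ_three,
        Matrix.one_apply] <;>
      first
        | linear_combination he₁
        | linear_combination he₂
        | linear_combination hn
        | linear_combination h12
        | linear_combination h1n
        | linear_combination h2n
  have hMTM : Mᵀ * M = 1 := mul_eq_one_comm.mp hMMT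
  have h : (Mᵀ * M) i j = (1 : Matrix (Fin 3) (Fin 3) ℝ) i j := by rw [hMTM]
  simp [hM, Matrix.mul_apply, Matrix.transpose_apply, Matrix.transpose, Matrix.vecHead, Matrix.vecTail, Fin.sum_univ_three,
    Matrix.one_apply] at h
  linear_combination h

lemma sumE (S : Matrix (Fin 3) (Fin 3) ℝ) (x n e : Fin 3 → ℝ)
    (he : ∑ i, e i ^ 2 = 1) (hen : ∑ i, e i * n i = 0) :
    ∑ α, ∑ β, e α * dnhEntry S x n α β * e β =
      Matrix.trace S / 3 * (∑ i, x i * n i) -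
        1 / 3 * (∑ i, ((∑ j, S i j * n j) * x i + (∑ j, S i j * x j) * n i)) -
        2 / 3 * (∑ i, x i * n i) * (∑ α, ∑ β, e α * S α β * e β) +
        2 / 3 * (∑ i, e i * x i) * (∑ i, e i * (∑ j, S i j * n j)) := by
  simp only [dnh]
  simp [Fin.sum_univ_three] at he hen ⊢
  linear_combination (Matrix.trace S / 3 * (x 0 * n 0 + x 1 * n 1 + x 2 * n 2) - 1/3 * ((S 0 0 * n 0 + S 0 1 * n 1 + S 0 2 * n 2) * x 0 + (S 1 0 * n 0 + S 1 1 * n 1 + S 1 2 * n 2) * x 1 + (S 2 0 * n 0 + S 2 1 * n 1 + S 2 2 * n 2) * x 2 + (S 0 0 * x 0 + S 0 1 * x 1 + S 0 2 * x 2) * n 0 + (S 1 0 * x 0 + S 1 1 * x 1 + S 1 2 * x 2) * n 1 + (S 2 0 * x 0 + S 2 1 * x 1 + S 2 2 * x 2) * n 2)) * he + (-(Matrix.trace S / 3) * (e 0 * x 0 + e 1 * x 1 + e 2 * x 2) + 2/3 * (e 0 * (S 0 0 * x 0 + S 0 1 * x 1 + S 0 2 * x 2) + e 1 * (S 1 0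 * x 0 + S 1 1 * x 1 + S 1 2 * x 2) + e 2 * (S 2 0 * x 0 + S 2 1 * x 1 + S 2 2 * x 2))) * hen

theorem statement16 (S : Matrix (Fin 3) (Fin 3) ℝ) (hS : S.IsSymm)
    (Atil : ℝ) (hA : 0 < Atil) (n₀ e₁ e₂ x : Fin 3 → ℝ)
    (hn : ∑ i, n₀ i ^ 2 = 1) (he₁ : ∑ i, e₁ i ^ 2 = 1) (he₂ : ∑ i, e₂ i ^ 2 = 1)
    (h12 : ∑ i, e₁ i * e₂ i = 0) (h1n : ∑ i, e₁ i * n₀ i = 0)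
    (h2n : ∑ i, e₂ i * n₀ i = 0)
    (hx : x = Atil • (n₀ + exv)) :
    (∑ α, ∑ β, e₁ α * dnhEntry S x n₀ α β * e₁ β) +
        (∑ α, ∑ β, e₂ α * dnhEntry S x n₀ α β * e₂ β) =
      -(2 * Atil / 3) * ∑ i, (∑ j, S i j * (n₀ j + exv j)) * n₀ i := by
  have compl := completeness e₁ e₂ n₀ he₁ he₂ hn h12 h1n h2n
  have C00 : e₁ 0 * e₁ 0 + e₂ 0 * e₂ 0 + n₀ 0 * n₀ 0 = 1 := by
    simpa using compl 0 0
  have C01 : e₁ 0 * e₁ 1 + e₂ 0 * e₂ 1 + n₀ 0 * n₀ 1 = 0 := by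
    simpa using compl 0 1
  have C02 : e₁ 0 * e₁ 2 + e₂ 0 * e₂ 2 + n₀ 0 * n₀ 2 = 0 := by
    simpa using compl 0 2
  have C10 : e₁ 1 * e₁ 0 + e₂ 1 * e₂ 0 + n₀ 1 * n₀ 0 = 0 := by
    simpa using compl 1 0
  have C11 : e₁ 1 * e₁ 1 + e₂ 1 * e₂ 1 + n₀ 1 * n₀ 1 = 1 := by
    simpa using compl 1 1
  have C12 : e₁ 1 * e₁ 2 + e₂ 1 * e₂ 2 + n₀ 1 * n₀ 2 = 0 := by
    simpa using compl 1 2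
  have C20 : e₁ 2 * e₁ 0 + e₂ 2 * e₂ 0 + n₀ 2 * n₀ 0 = 0 := by
    simpa using compl 2 0
  have C21 : e₁ 2 * e₁ 1 + e₂ 2 * e₂ 1 + n₀ 2 * n₀ 1 = 0 := by
    simpa using compl 2 1
  have C22 : e₁ 2 * e₁ 2 + e₂ 2 * e₂ 2 + n₀ 2 * n₀ 2 = 1 := by
    simpa using compl 2 2
  rw [sumE S x n₀ e₁ he₁ h1n, sumE S x n₀ e₂ he₂ h2n]
  subst hx
  simp [Matrix.trace, Matrix.diag, Fin.sum_univ_three, exv, Matrix.vecHead, Matrix.vecTail, Function.comp]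
  linear_combination
      (-(2/3) * ((Atil * (n₀ 0 + 1)) * n₀ 0 + (Atil * n₀ 1) * n₀ 1 + (Atil * n₀ 2) * n₀ 2) * S 0 0 + 2/3 * (Atil * (n₀ 0 + 1)) * (S 0 0 * n₀ 0 + S 0 1 * n₀ 1 + S 0 2 * n₀ 2)) * C00 +
      (-(2/3) * ((Atil * (n₀ 0 + 1)) * n₀ 0 + (Atil * n₀ 1) * n₀ 1 + (Atil * n₀ 2) * n₀ 2) * S 0 1 + 2/3 * (Atil * (n₀ 0 + 1)) * (S 1 0 * n₀ 0 + S 1 1 * n₀ 1 + S 1 2 * n₀ 2)) * C01 +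
      (-(2/3) * ((Atil * (n₀ 0 + 1)) * n₀ 0 + (Atil * n₀ 1) * n₀ 1 + (Atil * n₀ 2) * n₀ 2) * S 0 2 + 2/3 * (Atil * (n₀ 0 + 1)) * (S 2 0 * n₀ 0 + S 2 1 * n₀ 1 + S 2 2 * n₀ 2)) * C02 +
      (-(2/3) * ((Atil * (n₀ 0 + 1)) * n₀ 0 + (Atil * n₀ 1) * n₀ 1 + (Atil * n₀ 2) * n₀ 2) * S 1 0 + 2/3 * (Atil * n₀ 1) * (S 0 0 * n₀ 0 + S 0 1 * n₀ 1 + S 0 2 * n₀ 2)) * C10 +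
      (-(2/3) * ((Atil * (n₀ 0 + 1)) * n₀ 0 + (Atil * n₀ 1) * n₀ 1 + (Atil * n₀ 2) * n₀ 2) * S 1 1 + 2/3 * (Atil * n₀ 1) * (S 1 0 * n₀ 0 + S 1 1 * n₀ 1 + S 1 2 * n₀ 2)) * C11 +
      (-(2/3) * ((Atil * (n₀ 0 + 1)) * n₀ 0 + (Atil * n₀ 1) * n₀ 1 + (Atil * n₀ 2) * n₀ 2) * S 1 2 + 2/3 * (Atil * n₀ 1) * (S 2 0 * n₀ 0 + S 2 1 * n₀ 1 + S 2 2 * n₀ 2)) * C12 +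
      (-(2/3) * ((Atil * (n₀ 0 + 1)) * n₀ 0 + (Atil * n₀ 1) * n₀ 1 + (Atil * n₀ 2) * n₀ 2) * S 2 0 + 2/3 * (Atil * n₀ 2) * (S 0 0 * n₀ 0 + S 0 1 * n₀ 1 + S 0 2 * n₀ 2)) * C20 +
      (-(2/3) * ((Atil * (n₀ 0 + 1)) * n₀ 0 + (Atil * n₀ 1) * n₀ 1 + (Atil * n₀ 2) * n₀ 2) * S 2 1 + 2/3 * (Atil * n₀ 2) * (S 1 0 * n₀ 0 + S 1 1 * n₀ 1 + S 1 2 * n₀ 2)) * C21 +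
      (-(2/3) * ((Atil * (n₀ 0 + 1)) * n₀ 0 + (Atil * n₀ 1) * n₀ 1 + (Atil * n₀ 2) * n₀ 2) * S 2 2 + 2/3 * (Atil * n₀ 2) * (S 2 0 * n₀ 0 + S 2 1 * n₀ 1 + S 2 2 * n₀ 2)) * C22
end
end
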